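/- Let m be a nonzero integer, Ω > 0, Λ = l(l+1) with integer l ≥ 2, M > 0, and let c(σ) = (16 m² M Ω² / Λ²) · σ / (σ − (i m/Λ)(Λ−2) Ω). If σ ∈ ℂ satisfies |Re(σ)| > (|m| Ω / Λ)(Λ − 2 + 8 |m| M Ω / Λ), then |c(σ)| < 2 |Re(σ)|. -/

import Mathlib

/-- Key estimate for the Rouché argument: if
`|Re σ| > (|m|Ω/Λ)(Λ − 2 + 8|m|MΩ/Λ)` then `|c(σ)| < 2|Re σ|`, where
`c(σ) = (16m²MΩ²/Λ²)·σ/(σ − (im/Λ)(Λ−2)Ω)`. -/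
theorem stmt6 (m l : ℤ) (hm : m ≠ 0) (hl : 2 ≤ l) (Ω M Λ : ℝ)
    (hΛ : Λ = (l : ℝ) * ((l : ℝ) + 1)) (hΩ : 0 < Ω) (hM : 0 < M) (σ : ℂ)
    (hσ : ((|m| : ℝ) * Ω / Λ) * (Λ - 2 + 8 * (|m| : ℝ) * M * Ω / Λ) < |σ.re|) :
    ‖(16 * (m : ℂ) ^ 2 * (M : ℂ) * (Ω : ℂ) ^ 2 / (Λ : ℂ) ^ 2) * σ /
        (σ - ((m : ℂ) * Complex.I / (Λ : ℂ)) * ((Λ : ℂ) - 2) * (Ω : ℂ))‖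
      < 2 * |σ.re| := by
  have hl' : (2:ℝ) ≤ (l:ℝ) := by exact_mod_cast hl
  have hΛ6 : (6:ℝ) ≤ Λ := by rw [hΛ]; nlinarith
  have hΛ0 : (0:ℝ) < Λ := by linarith
  set μ : ℝ := |(m:ℝ)| with hμdef
  have hμ0 : 0 < μ := by
    simp only [hμdef, abs_pos]; exact_mod_cast hm
  set α : ℝ := (m:ℝ) * (Λ-2) * Ω / Λ with hαdef
  set K : ℝ := 16 * μ^2 * M * Ω^2 / Λ^2 with hKdef
  have hK0 : 0 < K := by positivity
  -- rewrite hypothesis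
  push_cast at hσ
  have hα : |α| = μ * (Λ-2) * Ω / Λ := by
    rw [hαdef, abs_div, abs_mul, abs_mul, abs_of_pos hΩ, abs_of_pos hΛ0,
      abs_of_nonneg (by linarith : (0:ℝ) ≤ Λ - 2)]
  have h3 : |α| + K / 2 < |σ.re| := by
    have hident : (μ * Ω / Λ) * (Λ - 2 + 8 * μ * M * Ω / Λ)
        = μ * (Λ-2) * Ω / Λ + K / 2 := by
      rw [hKdef]; field_simp; ring
    rw [hα]
    calc μ * (Λ-2) * Ω / Λ + K / 2 = (μ * Ω / Λ) * (Λ - 2 + 8 * μ * M * Ω / Λ) :=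
          hident.symm
      _ < |σ.re| := hσ
  have hnum : (16 * (m:ℂ)^2 * (M:ℂ) * (Ω:ℂ)^2 / (Λ:ℂ)^2) = ((K:ℝ):ℂ) := by
    rw [hKdef, hμdef]
    push_cast [sq_abs]
    ring
  have hden : σ - ((m:ℂ) * Complex.I / (Λ:ℂ)) * ((Λ:ℂ) - 2) * (Ω:ℂ)
      = σ - ((α:ℝ):ℂ) * Complex.I := by
    rw [hαdef]
    have : (Λ:ℂ) ≠ 0 := by exact_mod_cast hΛ0.ne'
    push_cast
    field_simp
  rw [hnum, hden, norm_div, norm_mul, Complex.norm_real, Real.norm_eq_abs, abs_of_pos hK0]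
  set D : ℝ := ‖σ - ((α:ℝ):ℂ) * Complex.I‖ with hDdef
  have hre : (σ - ((α:ℝ):ℂ) * Complex.I).re = σ.re := by simp
  have hRD : |σ.re| ≤ D := by
    rw [← hre]; exact Complex.abs_re_le_norm _
  have hR0 : 0 < |σ.re| := lt_of_le_of_lt (by positivity) h3
  have hD0 : 0 < D := lt_of_lt_of_le hR0 hRD
  have h2 : ‖σ‖ ≤ D + |α| := by
    have h := norm_add_le (σ - ((α:ℝ):ℂ) * Complex.I) (((α:ℝ):ℂ) * Complex.I)
    simpa [hDdef, Real.sqrt_mul_self_eq_abs] using h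
  have habs : 0 ≤ |α| := abs_nonneg α
  rw [div_lt_iff₀ hD0]
  nlinarith [mul_le_mul_of_nonneg_left h2 hK0.le, abs_nonneg α,
    mul_le_mul_of_nonneg_left hRD (by linarith : (0:ℝ) ≤ 2 * |σ.re| - K),
    mul_lt_mul_of_pos_right h3 hR0]
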